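/- Suppose h: ℕ → (0,∞) is non-increasing, δ > 1, and for every a ∈ (1,2] the limit g(a) := lim_{m→∞} a^{m(δ-1)} h(⌊a^m⌋) exists in (0,∞). Then the limit c := lim_{n→∞} n^{δ-1} h(n) exists in (0,∞). -/

import Mathlib

open Filter

/-- Reduction step for the asymptotics of `h`: if `h : ℕ → (0,∞)` is non-increasing,
`δ > 1`, and for every `a ∈ (1,2]` the limit `g(a) = lim_m a^{m(δ-1)} h(⌊a^m⌋)` exists
in `(0,∞)`, then `lim_n n^{δ-1} h(n)` exists in `(0,∞)`. -/
theorem limit_along_powers_implies_limit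
    (h : ℕ → ℝ) (hpos : ∀ n, 1 ≤ n → 0 < h n) (hmono : Antitone h)
    (δ : ℝ) (hδ : 1 < δ)
    (hg : ∀ a : ℝ, 1 < a → a ≤ 2 → ∃ g : ℝ, 0 < g ∧
      Tendsto (fun m : ℕ => a ^ ((m : ℝ) * (δ - 1)) * h ⌊a ^ m⌋₊) atTop (nhds g)) :
    ∃ c : ℝ, 0 < c ∧
      Tendsto (fun n : ℕ => (n : ℝ) ^ (δ - 1) * h n) atTop (nhds c) := by
  have hδ' : 0 < δ - 1 := sub_pos.mpr hδ
  set F : ℕ → ℝ := fun n => (n : ℝ) ^ (δ - 1) * h n with hFdef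
  set G : ℝ → ℕ → ℝ := fun a m => a ^ ((m : ℝ) * (δ - 1)) * h ⌊a ^ m⌋₊ with hGdef
  set mf : ℝ → ℕ → ℕ := fun a n => ⌊Real.logb a n⌋₊ with hmfdef
  -- nonnegativity of F
  have hFnonneg : ∀ n, 0 ≤ F n := by
    intro n
    rcases Nat.eq_zero_or_pos n with rfl | hn
    · simp [hFdef, Real.zero_rpow (by linarith : δ - 1 ≠ 0)]
    · exact mul_nonneg (Real.rpow_nonneg (Nat.cast_nonneg n) _) (hpos n hn).le
  -- the key sandwich estimate
  have sandwich : ∀ a : ℝ, 1 < a → ∀ n : ℕ, 1 ≤ n →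
      a ^ (1 - δ) * G a (mf a n + 1) ≤ F n ∧ F n ≤ a ^ (δ - 1) * G a (mf a n) := by
    intro a ha n hn
    have ha0 : (0 : ℝ) < a := lt_trans one_pos ha
    set m : ℕ := mf a n with hm
    have hn0 : (0 : ℝ) < n := by exact_mod_cast hn
    have hn1 : (1 : ℝ) ≤ n := by exact_mod_cast hn
    have hlogb0 : 0 ≤ Real.logb a n := Real.logb_nonneg ha hn1
    have h1 : (a : ℝ) ^ m ≤ n := by
      have : a ^ ((m : ℝ)) ≤ a ^ Real.logb a n :=
        (Real.rpow_le_rpow_left_iff ha).mpr (Nat.floor_le hlogb0)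
      rwa [Real.rpow_logb ha0 (ne_of_gt ha) hn0, Real.rpow_natCast] at this
    have h2 : (n : ℝ) ≤ a ^ (m + 1) := by
      have : a ^ Real.logb a n ≤ a ^ (((m + 1 : ℕ) : ℝ)) := by
        apply (Real.rpow_le_rpow_left_iff ha).mpr
        push_cast
        exact (Nat.lt_floor_add_one _).le
      rwa [Real.rpow_logb ha0 (ne_of_gt ha) hn0, Real.rpow_natCast] at this
    have hfl1 : ⌊(a : ℝ) ^ m⌋₊ ≤ n := by
      have := Nat.floor_le_floor (R := ℝ) h1
      simpa using this
    have hfl2 : n ≤ ⌊(a : ℝ) ^ (m + 1)⌋₊ := Nat.le_floor h2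
    have hpn : 0 < h n := hpos n hn
    have hamnn : (0 : ℝ) ≤ a ^ m := pow_nonneg ha0.le m
    constructor
    · -- lower bound
      have hr2 : a ^ ((m : ℝ) * (δ - 1)) ≤ (n : ℝ) ^ (δ - 1) := by
        have := Real.rpow_le_rpow hamnn h1 hδ'.le
        rwa [← Real.rpow_natCast a m, ← Real.rpow_mul ha0.le] at this
      have hhb : h ⌊(a : ℝ) ^ (m + 1)⌋₊ ≤ h n := hmono hfl2
      have hhbpos : 0 < h ⌊(a : ℝ) ^ (m + 1)⌋₊ := hpos _ (le_trans hn hfl2)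
      have step : a ^ ((m : ℝ) * (δ - 1)) * h ⌊(a : ℝ) ^ (m + 1)⌋₊ ≤ F n :=
        mul_le_mul hr2 hhb hhbpos.le (Real.rpow_nonneg hn0.le _)
      have e2 : a ^ ((m : ℝ) * (δ - 1)) = a ^ (1 - δ) * a ^ (((m + 1 : ℕ) : ℝ) * (δ - 1)) := by
        rw [← Real.rpow_add ha0]
        congr 1
        push_cast
        ring
      calc a ^ (1 - δ) * G a (m + 1)
          = a ^ ((m : ℝ) * (δ - 1)) * h ⌊(a : ℝ) ^ (m + 1)⌋₊ := by
            rw [hGdef]; dsimp only; rw [e2]; ring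
        _ ≤ F n := step
    · -- upper bound
      have hr1 : (n : ℝ) ^ (δ - 1) ≤ ((a : ℝ) ^ (m + 1)) ^ (δ - 1) :=
        Real.rpow_le_rpow hn0.le h2 hδ'.le
      have e1 : ((a : ℝ) ^ (m + 1)) ^ (δ - 1) = a ^ (δ - 1) * a ^ ((m : ℝ) * (δ - 1)) := by
        rw [← Real.rpow_natCast a (m + 1), ← Real.rpow_mul ha0.le, ← Real.rpow_add ha0]
        congr 1
        push_cast
        ring
      have hhb : h n ≤ h ⌊(a : ℝ) ^ m⌋₊ := hmono hfl1
      calc F n = (n : ℝ) ^ (δ - 1) * h n := rfl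
        _ ≤ ((a : ℝ) ^ (m + 1)) ^ (δ - 1) * h ⌊(a : ℝ) ^ m⌋₊ :=
            mul_le_mul hr1 hhb hpn.le (Real.rpow_nonneg (pow_nonneg ha0.le _) _)
        _ = a ^ (δ - 1) * G a m := by rw [e1, hGdef]; ring
  -- mf tends to infinity
  have hmf : ∀ a : ℝ, 1 < a → Tendsto (mf a) atTop atTop := by
    intro a ha
    exact tendsto_nat_floor_atTop.comp
      ((Real.tendsto_logb_atTop ha).comp tendsto_natCast_atTop_atTop)
  -- boundedness of F
  have hBddBelow : IsBoundedUnder (· ≥ ·) atTop F :=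
    ⟨0, eventually_map.2 (Eventually.of_forall fun n => hFnonneg n)⟩
  obtain ⟨g2, hg20, hg2t⟩ := hg 2 one_lt_two le_rfl
  have h2t : Tendsto (fun n => (2:ℝ) ^ (δ - 1) * G 2 (mf 2 n)) atTop
      (nhds ((2:ℝ) ^ (δ - 1) * g2)) :=
    tendsto_const_nhds.mul (hg2t.comp (hmf 2 one_lt_two))
  have hBddAbove : IsBoundedUnder (· ≤ ·) atTop F := by
    apply h2t.isBoundedUnder_le.mono_le
    filter_upwards [eventually_ge_atTop 1] with n hn
    exact (sandwich 2 one_lt_two n hn).2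
  set L : ℝ := limsup F atTop with hL
  set l : ℝ := liminf F atTop with hl
  have hlL : l ≤ L := liminf_le_limsup hBddAbove hBddBelow
  -- key bounds per a
  have key : ∀ a : ℝ, 1 < a → a ≤ 2 → ∃ ga : ℝ, 0 < ga ∧
      L ≤ a ^ (δ - 1) * ga ∧ a ^ (1 - δ) * ga ≤ l := by
    intro a ha ha2
    obtain ⟨ga, hga0, hgat⟩ := hg a ha ha2
    have ha0 : (0 : ℝ) < a := lt_trans one_pos ha
    refine ⟨ga, hga0, ?_, ?_⟩
    · have hup : Tendsto (fun n => a ^ (δ - 1) * G a (mf a n)) atTop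
          (nhds (a ^ (δ - 1) * ga)) := tendsto_const_nhds.mul (hgat.comp (hmf a ha))
      have h1 : L ≤ limsup (fun n => a ^ (δ - 1) * G a (mf a n)) atTop := by
        apply limsup_le_limsup ?_ hBddBelow.isCoboundedUnder_le hup.isBoundedUnder_le
        filter_upwards [eventually_ge_atTop 1] with n hn
        exact (sandwich a ha n hn).2
      rwa [hup.limsup_eq] at h1
    · have hmf1 : Tendsto (fun n => mf a n + 1) atTop atTop :=
        (tendsto_add_atTop_nat 1).comp (hmf a ha)
      have hlo : Tendsto (fun n => a ^ (1 - δ) * G a (mf a n + 1)) atTop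
          (nhds (a ^ (1 - δ) * ga)) := tendsto_const_nhds.mul (hgat.comp hmf1)
      have h1 : liminf (fun n => a ^ (1 - δ) * G a (mf a n + 1)) atTop ≤ l := by
        apply liminf_le_liminf ?_ hlo.isBoundedUnder_ge hBddAbove.isCoboundedUnder_ge
        filter_upwards [eventually_ge_atTop 1] with n hn
        exact (sandwich a ha n hn).1
      rwa [hlo.liminf_eq] at h1
  -- L ≤ a^(δ-1) * a^(δ-1) * l for all admissible a
  have hLal : ∀ a : ℝ, 1 < a → a ≤ 2 → L ≤ a ^ (δ - 1) * (a ^ (δ - 1) * l) := by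
    intro a ha ha2
    obtain ⟨ga, hga0, hup, hlo⟩ := key a ha ha2
    have ha0 : (0 : ℝ) < a := lt_trans one_pos ha
    have hgal : ga ≤ a ^ (δ - 1) * l := by
      have := mul_le_mul_of_nonneg_left hlo (Real.rpow_nonneg ha0.le (δ - 1))
      rwa [← mul_assoc, ← Real.rpow_add ha0, show δ - 1 + (1 - δ) = 0 by ring,
        Real.rpow_zero, one_mul] at this
    calc L ≤ a ^ (δ - 1) * ga := hup
      _ ≤ a ^ (δ - 1) * (a ^ (δ - 1) * l) :=
        mul_le_mul_of_nonneg_left hgal (Real.rpow_nonneg ha0.le _)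
  -- take a → 1 along a_k = 1 + 1/(k+1)
  have hLlel : L ≤ l := by
    set u : ℕ → ℝ := fun k => 1 + ((k : ℝ) + 1)⁻¹ with hu
    have hu1 : ∀ k, 1 < u k := by
      intro k
      have : (0:ℝ) < ((k : ℝ) + 1)⁻¹ := by positivity
      simp [hu]; linarith
    have hu2 : ∀ k, u k ≤ 2 := by
      intro k
      have h1 : ((k : ℝ) + 1)⁻¹ ≤ 1 := by
        rw [inv_le_one_iff₀]; right; linarith [Nat.cast_nonneg (α := ℝ) k]
      simp [hu]; linarith
    have hut : Tendsto u atTop (nhds 1) := by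
      have : Tendsto (fun k : ℕ => ((k : ℝ) + 1)⁻¹) atTop (nhds 0) :=
        tendsto_one_div_add_atTop_nhds_zero_nat.congr (by intro k; rw [one_div])
      simpa using tendsto_const_nhds.add this
    have hurp : Tendsto (fun k => (u k) ^ (δ - 1)) atTop (nhds 1) := by
      have := hut.rpow_const (p := δ - 1) (Or.inl one_ne_zero)
      simpa using this
    have hfull : Tendsto (fun k => (u k) ^ (δ - 1) * ((u k) ^ (δ - 1) * l)) atTop
        (nhds l) := by
      have := hurp.mul (hurp.mul (tendsto_const_nhds (x := l)))
      simpa using this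
    exact ge_of_tendsto hfull (Eventually.of_forall fun k => hLal (u k) (hu1 k) (hu2 k))
  have hLeq : L = l := le_antisymm hLlel hlL
  have hlpos : 0 < l := by
    obtain ⟨ga, hga0, _, hlo⟩ := key 2 one_lt_two le_rfl
    have : (0:ℝ) < (2:ℝ) ^ (1 - δ) * ga :=
      mul_pos (Real.rpow_pos_of_pos two_pos _) hga0
    linarith
  exact ⟨l, hlpos, tendsto_of_liminf_eq_limsup rfl hLeq hBddAbove hBddBelow⟩
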